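/- Let ℓ ≥ -1, r ≥ 8, and n ≥ 2ℓ+9 be integers. Let G be an n-vertex K_{r+1}-free graph with degree sequence d_1 ≤ ⋯ ≤ d_n. If there is an integer j with 1 ≤ j ≤ (n-1-ℓ)/2 such that d_j ≤ j + ℓ, then e(G) ≤ e(T_r(n-1)) + ℓ + 1. -/

import Mathlib

open SimpleGraph Finset

/-- Any `K_{r+1}`-free graph has at most as many edges as the Turán graph on the
same number of vertices. -/
lemma turan_bound_any {W : Type} [Fintype W] [DecidableEq W] (H : SimpleGraph W)
    [DecidableRel H.Adj] {r : ℕ} (hr : 0 < r) (hfree : H.CliqueFree (r + 1)) :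
    H.edgeFinset.card ≤ (turanGraph (Fintype.card W) r).edgeFinset.card := by
  classical
  set m := Fintype.card W
  let φ : Fin m ≃ W := (Fintype.equivFin W).symm
  let H' : SimpleGraph (Fin m) := H.comap φ.toEmbedding
  haveI : DecidableRel H'.Adj := fun a b => ‹DecidableRel H.Adj› _ _
  have iso : H' ≃g H := SimpleGraph.Iso.comap φ H
  have hfree' : H'.CliqueFree (r + 1) := hfree.comap iso.toEmbedding.isContained
  have hcard : H'.edgeFinset.card = H.edgeFinset.card := by
    rw [edgeFinset_card, edgeFinset_card]
    exact Fintype.card_congr iso.mapEdgeSet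
  rw [← hcard]
  exact (isTuranMaximal_turanGraph hr).2 hfree'

/-- Adding a vertex to the Turán graph gains at least `m - m / r` edges. -/
lemma turan_step {r : ℕ} (m : ℕ) :
    (turanGraph m r).edgeFinset.card + (m - m / r)
      ≤ (turanGraph (m + 1) r).edgeFinset.card := by
  classical
  set T1 := turanGraph (m + 1) r with hT1
  set T0 := turanGraph m r with hT0
  set last : Fin (m + 1) := Fin.last m with hlast
  set S : Finset (Sym2 (Fin (m+1))) := T1.incidenceFinset last with hS
  set B : Finset (Sym2 (Fin (m+1))) := T0.edgeFinset.image (Sym2.map Fin.castSucc) with hB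
  have hsub : S ∪ B ⊆ T1.edgeFinset := by
    intro e he
    rcases Finset.mem_union.1 he with h | h
    · rw [hS, mem_incidenceFinset] at h
      exact mem_edgeFinset.2 h.1
    · rw [hB, Finset.mem_image] at h
      obtain ⟨e', he', rfl⟩ := h
      induction e' with
      | _ a b =>
        rw [mem_edgeFinset] at he' ⊢
        simp only [Sym2.map_pair_eq]
        have : T0.Adj a b := he'
        exact this
  have hdisj : Disjoint S B := by
    rw [Finset.disjoint_left]
    intro e heS heB
    rw [hS, mem_incidenceFinset] at heS
    have hmemlast : last ∈ e := heS.2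
    rw [hB, Finset.mem_image] at heB
    obtain ⟨e', _, rfl⟩ := heB
    rw [Sym2.mem_map] at hmemlast
    obtain ⟨a, _, ha⟩ := hmemlast
    have : (a : ℕ) = m := by
      have := congrArg Fin.val ha
      simpa [hlast] using this
    exact absurd this (Nat.ne_of_lt a.2)
  have hcardS : S.card = T1.degree last := T1.card_incidenceFinset_eq_degree last
  have hcardB : B.card = T0.edgeFinset.card :=
    Finset.card_image_of_injective _ (Sym2.map.injective (Fin.castSucc_injective m))
  have hdeg : m - m / r ≤ T1.degree last := by
    rw [← card_neighborFinset_eq_degree, neighborFinset_eq_filter]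
    have hsplit := Finset.card_filter_add_card_filter_not
      (s := (Finset.univ : Finset (Fin (m+1)))) (fun w => T1.Adj last w)
    rw [Finset.card_univ, Fintype.card_fin] at hsplit
    have hne : (Finset.univ.filter (fun w => ¬ T1.Adj last w)).card ≤ (Finset.range (m / r + 1)).card := by
      refine Finset.card_le_card_of_injOn (t := Finset.range (m / r + 1)) (fun w => (w : ℕ) / r) ?_ ?_
      · intro w hw
        rw [Finset.mem_coe, Finset.mem_range]
        show (w : ℕ) / r < m / r + 1
        exact Nat.lt_succ_of_le (Nat.div_le_div_right (Nat.lt_succ_iff.1 w.2))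
      · intro w₁ hw₁ w₂ hw₂ hdiv
        rw [Finset.mem_coe, Finset.mem_filter] at hw₁ hw₂
        have h₁ : (w₁ : ℕ) % r = m % r := by
          have := hw₁.2; simp only [hT1, turanGraph] at this
          rw [not_not] at this; rw [← this]; rfl
        have h₂ : (w₂ : ℕ) % r = m % r := by
          have := hw₂.2; simp only [hT1, turanGraph] at this
          rw [not_not] at this; rw [← this]; rfl
        have hdiv' : (w₁ : ℕ) / r = (w₂ : ℕ) / r := hdiv
        have : (w₁ : ℕ) = (w₂ : ℕ) := by
          rw [← Nat.div_add_mod (w₁ : ℕ) r, ← Nat.div_add_mod (w₂ : ℕ) r, hdiv', h₁, h₂]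
        exact Fin.ext this
    rw [Finset.card_range] at hne
    omega
  calc T0.edgeFinset.card + (m - m / r) ≤ B.card + S.card := by omega
    _ = (S ∪ B).card := by rw [Finset.card_union_of_disjoint hdisj]; omega
    _ ≤ T1.edgeFinset.card := Finset.card_le_card hsub

lemma turan_sum_step {r : ℕ} {a b : ℕ} (hab : a ≤ b) :
    (turanGraph a r).edgeFinset.card + ∑ m ∈ Finset.Ico a b, (m - m / r)
      ≤ (turanGraph b r).edgeFinset.card := by
  induction b, hab using Nat.le_induction with
  | base => simp
  | succ b hab ih =>
    rw [Finset.sum_Ico_succ_top hab]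
    calc (turanGraph a r).edgeFinset.card + (∑ m ∈ Finset.Ico a b, (m - m / r) + (b - b / r))
        = ((turanGraph a r).edgeFinset.card + ∑ m ∈ Finset.Ico a b, (m - m / r)) + (b - b / r) := by ring
      _ ≤ (turanGraph b r).edgeFinset.card + (b - b / r) := by omega
      _ ≤ (turanGraph (b + 1) r).edgeFinset.card := turan_step b

lemma gauss_Ico (a b : ℕ) (hab : a ≤ b) :
    2 * (∑ m ∈ Finset.Ico a b, (m : ℤ)) = ((b : ℤ) - a) * ((a : ℤ) + b - 1) := by
  induction b, hab using Nat.le_induction with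
  | base => simp
  | succ b hab ih =>
    rw [Finset.sum_Ico_succ_top hab]
    push_cast
    push_cast at ih
    linear_combination ih

/-- The key growth inequality for the Turán numbers. -/
lemma turan_growth {r n j : ℕ} (ℓ : ℤ) (hr : 8 ≤ r) (hl : -1 ≤ ℓ)
    (hn : (2 : ℤ) * ℓ + 9 ≤ n) (hj1 : 1 ≤ j) (hj2 : (2 * j : ℤ) ≤ (n : ℤ) - 1 - ℓ) :
    ((turanGraph (n - j) r).edgeFinset.card : ℤ) + ((j : ℤ) - 1) * ((j : ℤ) + ℓ + 1)
      ≤ ((turanGraph (n - 1) r).edgeFinset.card : ℤ) := by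
  have hjn : (j : ℤ) ≤ (n : ℤ) - 1 := by omega
  have hjn' : j ≤ n - 1 := by omega
  have hab : n - j ≤ n - 1 := by omega
  have hsum := turan_sum_step (r := r) hab
  -- lower-bound the sum of increments
  have hterm : ∀ m ∈ Finset.Ico (n - j) (n - 1), 7 * (m : ℤ) ≤ 8 * ((m - m / r : ℕ) : ℤ) := by
    intro m _
    have h1 : m / r ≤ m := Nat.div_le_self m r
    have h2 : 8 * (m / r) ≤ m := by
      calc 8 * (m / r) ≤ r * (m / r) := Nat.mul_le_mul_right _ hr
        _ ≤ m := Nat.mul_div_le m r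
    have : ((m - m / r : ℕ) : ℤ) = (m : ℤ) - ((m / r : ℕ) : ℤ) := by
      exact_mod_cast Int.ofNat_sub h1
    rw [this]
    have h2' : (8 : ℤ) * ((m / r : ℕ) : ℤ) ≤ (m : ℤ) := by exact_mod_cast h2
    linarith
  have hS : 7 * (∑ m ∈ Finset.Ico (n - j) (n - 1), (m : ℤ))
      ≤ 8 * ((∑ m ∈ Finset.Ico (n - j) (n - 1), (m - m / r) : ℕ) : ℤ) := by
    push_cast
    rw [Finset.mul_sum, Finset.mul_sum]
    apply Finset.sum_le_sum
    intro m hm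
    have := hterm m hm
    push_cast at this
    exact this
  have hG := gauss_Ico (n - j) (n - 1) hab
  have hc1 : ((n - j : ℕ) : ℤ) = (n : ℤ) - j := by
    have : j ≤ n := by omega
    exact_mod_cast Int.ofNat_sub this
  have hc2 : ((n - 1 : ℕ) : ℤ) = (n : ℤ) - 1 := by
    have : 1 ≤ n := by omega
    exact_mod_cast Int.ofNat_sub this
  rw [hc1, hc2] at hG
  -- combine
  have hsum' : ((turanGraph (n - j) r).edgeFinset.card : ℤ)
      + ((∑ m ∈ Finset.Ico (n - j) (n - 1), (m - m / r) : ℕ) : ℤ)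
      ≤ ((turanGraph (n - 1) r).edgeFinset.card : ℤ) := by exact_mod_cast hsum
  have hkey : 16 * (((j : ℤ) - 1) * ((j : ℤ) + ℓ + 1))
      ≤ 7 * (((n : ℤ) - 1 - ((n : ℤ) - j)) * (((n : ℤ) - j) + ((n : ℤ) - 1) - 1)) := by
    have hfac : (0 : ℤ) ≤ (j : ℤ) - 1 := by omega
    have hlin : 16 * ((j : ℤ) + ℓ + 1) ≤ 7 * (2 * (n : ℤ) - (j : ℤ) - 2) := by linarith
    nlinarith [mul_nonneg hfac (sub_nonneg.2 hlin)]
  linarith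

theorem cliqueFree_low_degree_edge_bound_r_ge_8
    {V : Type} [Fintype V] [DecidableEq V]
    (G : SimpleGraph V) [DecidableRel G.Adj] (n r : ℕ) (ℓ : ℤ)
    (hl : -1 ≤ ℓ) (hr : 8 ≤ r) (hn : (2 : ℤ) * ℓ + 9 ≤ n)
    (hcard : Fintype.card V = n)
    (hfree : G.CliqueFree (r + 1))
    (hdegcond : ∃ (j : ℕ) (J : Finset V), 1 ≤ j ∧ (2 * j : ℤ) ≤ (n : ℤ) - 1 - ℓ ∧
      J.card = j ∧ ∀ v ∈ J, (G.degree v : ℤ) ≤ (j : ℤ) + ℓ) :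
    (G.edgeFinset.card : ℤ) ≤
      ((SimpleGraph.turanGraph (n - 1) r).edgeFinset.card : ℤ) + ℓ + 1 := by
  classical
  obtain ⟨j, J, hj1, hj2, hJcard, hJdeg⟩ := hdegcond
  have hr0 : 0 < r := by omega
  -- the induced subgraph on the complement of J
  set S : Set V := (↑J : Set V)ᶜ with hSdef
  let H : SimpleGraph ↥S := G.induce S
  haveI : DecidableRel H.Adj := fun a b => ‹DecidableRel G.Adj› _ _
  -- split the edges of G
  set A : Finset (Sym2 V) := G.edgeFinset.filter (fun e => ∀ x ∈ e, x ∉ J) with hA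
  have hsplit : G.edgeFinset.card ≤ A.card + ∑ v ∈ J, G.degree v := by
    have hsub : G.edgeFinset ⊆ A ∪ J.biUnion (fun v => G.incidenceFinset v) := by
      intro e he
      by_cases hcase : ∀ x ∈ e, x ∉ J
      · exact Finset.mem_union_left _ (Finset.mem_filter.2 ⟨he, hcase⟩)
      · push_neg at hcase
        obtain ⟨x, hxe, hxJ⟩ := hcase
        refine Finset.mem_union_right _ (Finset.mem_biUnion.2 ⟨x, hxJ, ?_⟩)
        rw [mem_incidenceFinset]
        exact ⟨mem_edgeFinset.1 he, hxe⟩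
    calc G.edgeFinset.card ≤ (A ∪ J.biUnion (fun v => G.incidenceFinset v)).card :=
          Finset.card_le_card hsub
      _ ≤ A.card + (J.biUnion (fun v => G.incidenceFinset v)).card := Finset.card_union_le _ _
      _ ≤ A.card + ∑ v ∈ J, (G.incidenceFinset v).card := by
          exact Nat.add_le_add_left (Finset.card_biUnion_le) _
      _ = A.card + ∑ v ∈ J, G.degree v := by
          simp [card_incidenceFinset_eq_degree]
  -- edges avoiding J inject into the induced subgraph
  have hAle : A.card ≤ H.edgeFinset.card := by
    have hsub : A ⊆ H.edgeFinset.image (Sym2.map (fun x : ↥S => (x : V))) := by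
      intro e he
      rw [hA, Finset.mem_filter] at he
      obtain ⟨he1, he2⟩ := he
      induction e with
      | _ a b =>
        have ha : a ∈ S := he2 a (Sym2.mem_mk_left a b)
        have hb : b ∈ S := he2 b (Sym2.mem_mk_right a b)
        refine Finset.mem_image.2 ⟨s(⟨a, ha⟩, ⟨b, hb⟩), ?_, by simp⟩
        rw [mem_edgeFinset]
        exact (mem_edgeFinset.1 he1 : G.Adj a b)
    calc A.card ≤ (H.edgeFinset.image (Sym2.map (fun x : ↥S => (x : V)))).card :=
          Finset.card_le_card hsub
      _ ≤ H.edgeFinset.card := Finset.card_image_le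
  -- H is cliquefree
  have hHfree : H.CliqueFree (r + 1) := hfree.comap (Embedding.induce S).isContained
  -- card of the complement
  have hScard : Fintype.card ↥S = n - j := by
    have : Fintype.card ↥((↑J : Set V)ᶜ) = Fintype.card V - J.card := by
      rw [Fintype.card_compl_set]; simp
    rw [hcard, hJcard] at this
    exact this
  -- Turán bound on H
  have hHle : H.edgeFinset.card ≤ (turanGraph (n - j) r).edgeFinset.card := by
    have := turan_bound_any H hr0 hHfree
    rwa [hScard] at this
  -- degree sum bound
  have hdegsum : ((∑ v ∈ J, G.degree v : ℕ) : ℤ) ≤ (j : ℤ) * ((j : ℤ) + ℓ) := by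
    push_cast
    calc (∑ v ∈ J, (G.degree v : ℤ)) ≤ ∑ _v ∈ J, ((j : ℤ) + ℓ) :=
          Finset.sum_le_sum hJdeg
      _ = (j : ℤ) * ((j : ℤ) + ℓ) := by rw [Finset.sum_const, hJcard]; ring
  have hgrow := turan_growth (r := r) (n := n) (j := j) ℓ hr hl hn hj1 hj2
  have h1 : (G.edgeFinset.card : ℤ) ≤ (A.card : ℤ) + ((∑ v ∈ J, G.degree v : ℕ) : ℤ) := by
    exact_mod_cast hsplit
  have h2 : (A.card : ℤ) ≤ ((turanGraph (n - j) r).edgeFinset.card : ℤ) := by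
    exact_mod_cast hAle.trans hHle
  have hring : (j : ℤ) * ((j : ℤ) + ℓ) = ((j : ℤ) - 1) * ((j : ℤ) + ℓ + 1) + ℓ + 1 := by ring
  linarith
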